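/- arXiv:0910.1781 — 2 statements merged into one kernel-verified Lean document; each statement's English description precedes it below -/
import Mathlib

section
/- Let W be a topological space, let w₀, w₁ ∈ W, let τ₀ and τ₁ be paths from w₀ to w₁, and let φ be a loop at w₁. Then there exists a continuous map F : [0,1] × [0,1] → W satisfying F(t,0) = τ₀(t), F(t,1) = τ₁(t), F(0,s) = w₀, and F(1,s) = φ(s) for all s, t ∈ [0,1], if and only if the rel-endpoint homotopy class of τ₁ equals the rel-endpoint homotopy class of the concatenation of τ₀ followed by φ, i.e., ⟦τ₁⟧ = ⟦τ₀⟧ · ⟦φ⟧. -/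
attribute [local instance] Path.Homotopic.setoid

open unitInterval

noncomputable section HalfFreeAux

/-- Clamp a real number into the unit interval. -/
noncomputable def hfPr (x : ℝ) : I := Set.projIcc (0:ℝ) 1 zero_le_one x

lemma hfPr_coe (t : I) : hfPr (t : ℝ) = t := by
  simp [hfPr, Set.projIcc_of_mem, Set.projIcc_val]

lemma hf_path_pr {W : Type*} [TopologicalSpace W] {a b : W} (γ : Path a b) (x : ℝ) :
    γ (hfPr x) = γ.extend x := rfl

lemma hf_continuous_pr : Continuous hfPr := continuous_projIcc (h := zero_le_one)

lemma hf_trans_le_half {W : Type*} [TopologicalSpace W] {w₀ w₁ : W}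
    (τ₀ : Path w₀ w₁) (φ : Path w₁ w₁) {u : ℝ} (h0 : 0 ≤ u) (h : u ≤ 1/2) :
    (τ₀.trans φ).extend u = τ₀.extend (2*u) := by
  have hmem : u ∈ Set.Icc (0:ℝ) 1 := ⟨h0, by linarith⟩
  rw [Path.extend_apply _ hmem, Path.trans_apply]
  rw [dif_pos (by exact_mod_cast h)]
  rw [Path.extend_apply _ ⟨by linarith, by linarith⟩]

lemma hf_trans_ge_half {W : Type*} [TopologicalSpace W] {w₀ w₁ : W}
    (τ₀ : Path w₀ w₁) (φ : Path w₁ w₁) {u : ℝ} (h : 1/2 ≤ u) :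
    (τ₀.trans φ).extend u = φ.extend (2*u - 1) := by
  by_cases h1 : u ≤ 1
  · have hmem : u ∈ Set.Icc (0:ℝ) 1 := ⟨by linarith, h1⟩
    rw [Path.extend_apply _ hmem, Path.trans_apply]
    by_cases he : u = 1/2
    · subst he
      rw [dif_pos (by norm_num)]
      norm_num [Path.extend_zero]
    · rw [dif_neg (by push_cast; exact fun hc => he (le_antisymm hc h))]
      rw [Path.extend_apply _ ⟨by linarith, by linarith⟩]
  · push_neg at h1
    rw [Path.extend_of_one_le _ h1.le, Path.extend_of_one_le _ (by linarith)]

lemma hfPr_zero : hfPr (0:ℝ) = 0 := by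
  rw [← Set.Icc.coe_zero]; exact hfPr_coe 0

lemma hfPr_one : hfPr (1:ℝ) = 1 := by
  rw [← Set.Icc.coe_one]; exact hfPr_coe 1

end HalfFreeAux

/-- Half-free homotopy lemma: given paths `τ₀ τ₁` from `w₀` to `w₁` and a loop `φ` at `w₁`,
there is a homotopy `F` from `τ₀` to `τ₁` fixing the initial point `w₀` and moving the
terminal point along `φ` if and only if `⟦τ₁⟧ = ⟦τ₀⟧ ⬝ ⟦φ⟧`. -/
theorem half_free_homotopy {W : Type*} [TopologicalSpace W] {w₀ w₁ : W}
    (τ₀ τ₁ : Path w₀ w₁) (φ : Path w₁ w₁) :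
    (∃ F : I × I → W, Continuous F ∧
        (∀ t, F (t, 0) = τ₀ t) ∧
        (∀ t, F (t, 1) = τ₁ t) ∧
        (∀ s, F (0, s) = w₀) ∧
        (∀ s, F (1, s) = φ s)) ↔
      (⟦τ₁⟧ : Path.Homotopic.Quotient w₀ w₁) =
        Path.Homotopic.Quotient.trans (⟦τ₀⟧ : Path.Homotopic.Quotient w₀ w₁) (⟦φ⟧ : Path.Homotopic.Quotient w₁ w₁) := by
  constructor
  · rintro ⟨F, Fc, hFb, hFt, hFl, hFr⟩
    change _ = (⟦τ₀.trans φ⟧ : Path.Homotopic.Quotient w₀ w₁)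
    refine Quotient.sound (Path.Homotopic.symm ⟨?_⟩)
    refine
      { toContinuousMap := ContinuousMap.mk (fun p : I × I =>
            if ((p.2 : I) : ℝ) ≤ (1 + ((p.1 : I) : ℝ))/2 then
              F (hfPr (2*(p.2:ℝ)/(1+(p.1:ℝ))), p.1)
            else φ.extend (2*(p.2:ℝ) - 1)) ?_
        map_zero_left := ?_
        map_one_left := ?_
        prop' := ?_ }
    · apply Continuous.if_le
      · refine Fc.comp (Continuous.prodMk ?_ continuous_fst)
        refine hf_continuous_pr.comp ?_
        refine Continuous.div (by fun_prop) (by fun_prop) ?_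
        rintro ⟨a, b⟩
        have := a.2.1
        dsimp only
        intro hc
        linarith
      · exact φ.continuous_extend.comp (by fun_prop)
      · fun_prop
      · fun_prop
      · rintro ⟨a, b⟩ h
        dsimp only at h ⊢
        have ha : (1:ℝ) + (a:ℝ) ≠ 0 := by have := a.2.1; intro hc; linarith
        have harg : 2*(b:ℝ)/(1+(a:ℝ)) = 1 := by
          rw [h]; field_simp
        rw [harg]
        rw [show hfPr (1:ℝ) = 1 from hfPr_coe 1, hFr]
        rw [show (2*(b:ℝ) - 1) = (a:ℝ) by linarith [h]]
        exact (φ.extend_extends' a).symm ▸ rfl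
    · intro t
      simp only [ContinuousMap.coe_mk]
      rw [show ((τ₀.trans φ).toContinuousMap t) = (τ₀.trans φ) t from rfl, Path.trans_apply]
      by_cases h : (t:ℝ) ≤ 1/2
      · rw [if_pos (by simp; linarith), dif_pos h]
        simp only [Set.Icc.coe_zero, add_zero, div_one]
        rw [hFb, hf_path_pr, Path.extend_apply]
      · rw [if_neg (by simp; linarith [not_le.1 h]), dif_neg h]
        exact Path.extend_apply _ _
    · intro t
      simp only [ContinuousMap.coe_mk]
      rw [if_pos (by simp only [Set.Icc.coe_one]; linarith [t.2.2])]
      have : 2*(t:ℝ)/(1+((1:I):ℝ)) = (t:ℝ) := by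
        simp; ring
      rw [this, hfPr_coe, hFt]
      rfl
    · intro v x hx
      simp only [Set.mem_insert_iff, Set.mem_singleton_iff] at hx
      have hv0 := v.2.1
      have hv1 := v.2.2
      rcases hx with hx | hx <;> subst hx
      · simp only [ContinuousMap.coe_mk]
        rw [if_pos (by simp; linarith)]
        simp only [Set.Icc.coe_zero, mul_zero, zero_div]
        rw [show hfPr (0:ℝ) = 0 from hfPr_coe 0, hFl]
        symm
        exact (τ₀.trans φ).source
      · simp only [ContinuousMap.coe_mk]
        by_cases h : ((1:I):ℝ) ≤ (1 + (v:ℝ))/2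
        · rw [if_pos h]
          have hv : (v:ℝ) = 1 := by simp at h; linarith
          have : 2*((1:I):ℝ)/(1+(v:ℝ)) = 1 := by rw [hv]; norm_num
          rw [this, show hfPr (1:ℝ) = 1 from hfPr_coe 1, hFr]
          have : v = 1 := Subtype.ext hv
          rw [this]
          simp
        · rw [if_neg h]
          simp only [Set.Icc.coe_one]
          norm_num
  · intro hq
    change _ = (⟦τ₀.trans φ⟧ : Path.Homotopic.Quotient w₀ w₁) at hq
    obtain ⟨H⟩ := Path.Homotopic.symm (Quotient.exact hq)
    refine ⟨fun p : I × I =>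
      if ((p.2:I):ℝ) ≤ 1/3 then (τ₀.trans φ).extend ((p.1:ℝ)*(1+(p.2:ℝ))/2)
      else if ((p.2:I):ℝ) ≤ 2/3 then
        (τ₀.trans φ).extend
          (min (2*(p.1:ℝ)*(3*(p.2:ℝ)+1)/(7-3*(p.2:ℝ))) ((3+(p.2:ℝ))/2 - (p.1:ℝ)))
      else if ((p.1:I):ℝ) ≤ (1+(p.2:ℝ))/2 then
        H (hfPr (3*(p.2:ℝ)-2), hfPr (2*(p.1:ℝ)/(1+(p.2:ℝ))))
      else φ.extend (2-2*(p.1:ℝ)+(p.2:ℝ)), ?_, ?_, ?_, ?_, ?_⟩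
    -- continuity
    · apply Continuous.if_le
      · exact (τ₀.trans φ).continuous_extend.comp (by fun_prop)
      · apply Continuous.if_le
        · apply (τ₀.trans φ).continuous_extend.comp
          apply Continuous.min
          · refine Continuous.div (by fun_prop) (by fun_prop) ?_
            rintro ⟨a, b⟩
            have := b.2.2
            dsimp only
            intro hc
            linarith
          · fun_prop
        · apply Continuous.if_le
          · refine H.continuous.comp (Continuous.prodMk ?_ ?_)
            · exact hf_continuous_pr.comp (by fun_prop)
            · refine hf_continuous_pr.comp (Continuous.div (by fun_prop) (by fun_prop) ?_)
              rintro ⟨a, b⟩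
              have := b.2.1
              dsimp only
              intro hc
              linarith
          · exact φ.continuous_extend.comp (by fun_prop)
          · fun_prop
          · fun_prop
          · rintro ⟨a, b⟩ h
            dsimp only at h ⊢
            have hb1 : (1:ℝ) + (b:ℝ) ≠ 0 := by have := b.2.1; intro hc; linarith
            have e1 : 2*(a:ℝ)/(1+(b:ℝ)) = 1 := by rw [h]; field_simp
            rw [e1, hfPr_one, Path.Homotopy.target]
            have e2 : 2-2*(a:ℝ)+(b:ℝ) = 1 := by rw [h]; ring
            rw [e2, Path.extend_one]
        · fun_prop
        · fun_prop
        · rintro ⟨a, b⟩ h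
          dsimp only at h ⊢
          rw [h]
          have ha0 := a.2.1
          have ha1 := a.2.2
          have hX : 2*(a:ℝ)*(3*(2/3:ℝ)+1)/(7-3*(2/3:ℝ)) = 6*(a:ℝ)/5 := by
            norm_num
            ring
          have hY : (3+(2/3:ℝ))/2 - (a:ℝ) = 11/6 - (a:ℝ) := by norm_num
          rw [hX, hY]
          by_cases ha : (a:ℝ) ≤ 5/6
          · rw [if_pos (by linarith), min_eq_left (by linarith)]
            have e0 : 3*(2/3:ℝ)-2 = 0 := by norm_num
            have e1 : 2*(a:ℝ)/(1+(2/3:ℝ)) = 6*(a:ℝ)/5 := by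
              field_simp
              ring
            rw [e0, e1, hfPr_zero, ContinuousMap.HomotopyWith.apply_zero]
            exact (hf_path_pr (τ₀.trans φ) (6*(a:ℝ)/5)).symm
          · rw [if_neg (by linarith), min_eq_right (by linarith)]
            rw [hf_trans_ge_half τ₀ φ (by linarith)]
            congr 1
            ring
      · fun_prop
      · fun_prop
      · rintro ⟨a, b⟩ h
        dsimp only at h ⊢
        rw [h, if_pos (by norm_num)]
        have ha1 := a.2.2
        have hX : 2*(a:ℝ)*(3*(1/3:ℝ)+1)/(7-3*(1/3:ℝ)) = 2*(a:ℝ)/3 := by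
          norm_num
          ring
        have hY : (3+(1/3:ℝ))/2 - (a:ℝ) = 5/3 - (a:ℝ) := by norm_num
        rw [hX, hY, min_eq_left (by linarith)]
        congr 1
        ring
    -- bottom: F (t, 0) = τ₀ t
    · intro t
      simp only [Set.Icc.coe_zero]
      rw [if_pos (by norm_num)]
      have ht0 := t.2.1
      have ht1 := t.2.2
      rw [hf_trans_le_half τ₀ φ (by linarith) (by linarith)]
      have : 2*((t:ℝ)*(1+0)/2) = (t:ℝ) := by ring
      rw [this]
      exact τ₀.extend_extends' t
    -- top: F (t, 1) = τ₁ t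
    · intro t
      simp only [Set.Icc.coe_one]
      rw [if_neg (by norm_num), if_neg (by norm_num), if_pos (by have := t.2.2; linarith)]
      have e2 : 3*(1:ℝ)-2 = 1 := by norm_num
      have e3 : 2*(t:ℝ)/(1+1) = (t:ℝ) := by ring
      rw [e2, e3, hfPr_one, hfPr_coe]
      exact ContinuousMap.HomotopyWith.apply_one H t
    -- left: F (0, s) = w₀
    · intro s
      simp only [Set.Icc.coe_zero]
      have hs0 := s.2.1
      have hs1 := s.2.2
      by_cases h1 : (s:ℝ) ≤ 1/3
      · rw [if_pos h1]
        have : (0:ℝ)*(1+(s:ℝ))/2 = 0 := by ring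
        rw [this, Path.extend_zero]
      · rw [if_neg h1]
        by_cases h2 : (s:ℝ) ≤ 2/3
        · rw [if_pos h2]
          have e1 : 2*(0:ℝ)*(3*(s:ℝ)+1)/(7-3*(s:ℝ)) = 0 := by simp
          have e2 : (3+(s:ℝ))/2 - 0 = (3+(s:ℝ))/2 := by ring
          rw [e1, e2, min_eq_left (by linarith)]
          exact Path.extend_zero _
        · rw [if_neg h2, if_pos (by linarith)]
          have e1 : 2*(0:ℝ)/(1+(s:ℝ)) = 0 := by simp
          rw [e1, hfPr_zero]
          exact Path.Homotopy.source H _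
    -- right: F (1, s) = φ s
    · intro s
      simp only [Set.Icc.coe_one]
      have hs0 := s.2.1
      have hs1 := s.2.2
      by_cases h1 : (s:ℝ) ≤ 1/3
      · rw [if_pos h1]
        rw [hf_trans_ge_half τ₀ φ (by linarith)]
        have : 2*((1:ℝ)*(1+(s:ℝ))/2) - 1 = (s:ℝ) := by ring
        rw [this]
        exact φ.extend_extends' s
      · rw [if_neg h1]
        by_cases h2 : (s:ℝ) ≤ 2/3
        · rw [if_pos h2]
          have h7 : (0:ℝ) < 7 - 3*(s:ℝ) := by linarith
          have hmin : min (2*(1:ℝ)*(3*(s:ℝ)+1)/(7-3*(s:ℝ))) ((3+(s:ℝ))/2 - 1)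
              = (3+(s:ℝ))/2 - 1 := by
            apply min_eq_right
            rw [le_div_iff₀ h7]
            nlinarith [mul_nonneg (by linarith : (0:ℝ) ≤ 3*(s:ℝ)-1)
              (by linarith : (0:ℝ) ≤ (s:ℝ)+3)]
          rw [hmin, hf_trans_ge_half τ₀ φ (by linarith)]
          have : 2*((3+(s:ℝ))/2 - 1) - 1 = (s:ℝ) := by ring
          rw [this]
          exact φ.extend_extends' s
        · rw [if_neg h2]
          by_cases h3 : (1:ℝ) ≤ (1+(s:ℝ))/2
          · rw [if_pos h3]
            have hs : (s:ℝ) = 1 := by linarith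
            have e : 2*(1:ℝ)/(1+(s:ℝ)) = 1 := by rw [hs]; norm_num
            rw [e, hfPr_one, Path.Homotopy.target]
            rw [show s = 1 from Subtype.ext (by rw [hs]; norm_num)]
            simp
          · rw [if_neg h3]
            have : 2-2*(1:ℝ)+(s:ℝ) = (s:ℝ) := by ring
            rw [this]
            exact φ.extend_extends' s
end

section
/- Let W be a topological space and W₀ ⊆ W a subset, and suppose (u, F) is an NDR presentation of the pair (W, W₀): u : W → [0,1] is continuous with W₀ = u⁻¹(0), F : W × [0,1] → W is continuous, F(w,0) = w for all w ∈ W, F(w,t) = w for all w ∈ W₀ and all t ∈ [0,1], and F(w,1) ∈ W₀ whenever u(w) < 1. Let Y be a nonempty compact topological space. Define û : C(Y,W) → [0,1] by û(f) = sup_{y ∈ Y} u(f(y)) and F̂ : C(Y,W) × [0,1] → C(Y,W) by (F̂(f,t))(y) = F(f(y), t). Then (û, F̂) is an NDR presentation of the pair (C(Y,W), C(Y,W₀)); that is: û is continuous; û⁻¹(0) = { f ∈ C(Y,W) : f(y) ∈ W₀ for all y ∈ Y }; F̂ is continuous; F̂(f,0) = f for all f; F̂(f,t) = f for all t whenever f(y)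 ∈ W₀ for all y; and if û(f) < 1 then (F̂(f,1))(y) ∈ W₀ for all y ∈ Y. -/
open unitInterval

/-- Joint continuity of `(f, t) ↦ (y ↦ (f y, t))` for `t` in a locally compact Hausdorff space. -/
lemma continuous_prodMk_const {Y W T : Type*} [TopologicalSpace Y] [TopologicalSpace W]
    [TopologicalSpace T] [LocallyCompactSpace T] :
    Continuous (fun p : C(Y, W) × T => (p.1.prodMk (ContinuousMap.const Y p.2))) := by
  rw [ContinuousMap.continuous_compactOpen]
  intro K hK U hU
  rw [isOpen_iff_forall_mem_open]
  rintro ⟨f, t⟩ (hft : Set.MapsTo _ K U)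
  -- tube lemma around (f '' K) × {t}
  obtain ⟨V₀, T₀, hV₀, hT₀, hfV₀, htT₀, hsub⟩ :=
    generalized_tube_lemma (hK.image f.continuous) isCompact_singleton hU
      (by rintro ⟨w, s⟩ ⟨⟨y, hy, rfl⟩, hs⟩
          rcases hs with rfl
          exact hft hy)
  -- compact neighborhood C of t inside T₀
  obtain ⟨C, hC, htC, hCT₀⟩ := exists_compact_subset hT₀ (htT₀ rfl)
  -- V = set of w such that {w} × C ⊆ U; it is open
  set V : Set W := {w | ∀ s ∈ C, (w, s) ∈ U} with hV
  have hVopen : IsOpen V := by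
    rw [isOpen_iff_forall_mem_open]
    intro w hw
    obtain ⟨N, T', hN, _, hwN, hCT', hNT'⟩ :=
      generalized_tube_lemma isCompact_singleton hC hU
        (by rintro ⟨w', s⟩ ⟨rfl, hs⟩; exact hw s hs)
    exact ⟨N, fun n hn s hs => hNT' ⟨hn, hCT' hs⟩, hN, hwN rfl⟩
  refine ⟨{g : C(Y, W) | Set.MapsTo g K V} ×ˢ interior C, ?_, ?_, ?_⟩
  · rintro ⟨g, s⟩ ⟨hg, hs⟩ y hy
    exact hg hy s (interior_subset hs)
  · exact (ContinuousMap.isOpen_setOf_mapsTo hK hVopen).prod isOpen_interior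
  · refine ⟨fun y hy s hs => hsub ⟨hfV₀ ⟨y, hy, rfl⟩, hCT₀ hs⟩, htC⟩

lemma sup_lipschitz {Y : Type*} [TopologicalSpace Y] [CompactSpace Y] [Nonempty Y] :
    LipschitzWith 1 (fun g : C(Y, ℝ) => ⨆ y, g y) := by
  have key : ∀ g h : C(Y, ℝ), (⨆ y, g y) - (⨆ y, h y) ≤ dist g h := by
    intro g h
    rw [sub_le_iff_le_add]
    refine ciSup_le fun y => ?_
    have h1 : g y - h y ≤ dist g h := by
      have := ContinuousMap.dist_apply_le_dist (f := g) (g := h) y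
      rw [Real.dist_eq] at this
      linarith [abs_sub_abs_le_abs_sub (g y) (h y), le_abs_self (g y - h y)]
    have h2 : h y ≤ ⨆ y, h y :=
      le_ciSup (f := fun y => h y) (isCompact_range h.continuous).bddAbove y
    linarith
  refine LipschitzWith.of_dist_le_mul fun g h => ?_
  rw [NNReal.coe_one, one_mul, Real.dist_eq, abs_sub_le_iff]
  exact ⟨key g h, (key h g).trans_eq (dist_comm h g)⟩

/-- If `(u, F)` is an NDR presentation of the pair `(W, W₀)` and `Y` is a nonempty compact
space, then `(û, F̂)` with `û f = ⨆ y, u (f y)` and `(F̂ (f, t)) y = F (f y, t)` is an NDR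
presentation of the pair `(C(Y, W), C(Y, W₀))`. -/
theorem ndr_pair_function_space {Y W : Type*} [TopologicalSpace Y] [TopologicalSpace W]
    [CompactSpace Y] [Nonempty Y]
    (W₀ : Set W)
    (u : W → ℝ) (hu : Continuous u) (hu01 : ∀ w, u w ∈ Set.Icc (0 : ℝ) 1)
    (hW₀ : W₀ = {w | u w = 0})
    (F : W × I → W) (hF : Continuous F)
    (hF0 : ∀ w, F (w, 0) = w)
    (hFW₀ : ∀ w ∈ W₀, ∀ t : I, F (w, t) = w)
    (hF1 : ∀ w, u w < 1 → F (w, 1) ∈ W₀) :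
    Continuous (fun f : C(Y, W) => ⨆ y : Y, u (f y)) ∧
      (∀ f : C(Y, W), (⨆ y : Y, u (f y)) = 0 ↔ ∀ y, f y ∈ W₀) ∧
      ∃ Fhat : C(Y, W) × I → C(Y, W),
        (∀ (f : C(Y, W)) (t : I) (y : Y), Fhat (f, t) y = F (f y, t)) ∧
        Continuous Fhat ∧
        (∀ f : C(Y, W), Fhat (f, 0) = f) ∧
        (∀ f : C(Y, W), (∀ y, f y ∈ W₀) → ∀ t : I, Fhat (f, t) = f) ∧
        (∀ f : C(Y, W), (⨆ y : Y, u (f y)) < 1 → ∀ y, Fhat (f, 1) y ∈ W₀) := by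
  have hbdd : ∀ f : C(Y, W), BddAbove (Set.range fun y => u (f y)) := fun f =>
    ⟨1, by rintro x ⟨y, rfl⟩; exact (hu01 _).2⟩
  have hle : ∀ (f : C(Y, W)) (y : Y), u (f y) ≤ ⨆ y, u (f y) := fun f y =>
    le_ciSup (hbdd f) y
  refine ⟨?_, ?_, ?_⟩
  · -- continuity of the sup
    have : (fun f : C(Y, W) => ⨆ y : Y, u (f y)) =
        (fun g : C(Y, ℝ) => ⨆ y, g y) ∘ (fun f : C(Y, W) => (⟨u, hu⟩ : C(W, ℝ)).comp f) := rfl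
    rw [this]
    exact sup_lipschitz.continuous.comp (ContinuousMap.continuous_postcomp _)
  · intro f
    constructor
    · intro h y
      have h0 : 0 ≤ u (f y) := (hu01 _).1
      have := hle f y
      rw [hW₀]
      exact le_antisymm (h ▸ hle f y) h0
    · intro h
      have : (fun y : Y => u (f y)) = fun _ => 0 := by
        funext y
        have := h y
        rw [hW₀] at this
        exact this
      rw [this, ciSup_const]
  · set Fc : C(W × I, W) := ⟨F, hF⟩
    refine ⟨fun p => Fc.comp (p.1.prodMk (ContinuousMap.const Y p.2)), fun f t y => rfl, ?_, ?_, ?_, ?_⟩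
    · exact (ContinuousMap.continuous_postcomp Fc).comp continuous_prodMk_const
    · intro f; exact ContinuousMap.ext fun y => hF0 (f y)
    · intro f h t; exact ContinuousMap.ext fun y => hFW₀ (f y) (h y) t
    · intro f h y
      exact hF1 (f y) (lt_of_le_of_lt (hle f y) h)
end
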